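/- In an SMC quadruple (T, T^p, S, S-collection), for any objects X, Y of T the direct system Hom_T(Y, X) → Hom_T(Y, X_{≤0}) → Hom_T(Y, X_{≤-1}) → ⋯ obtained by applying Hom(Y,−) to a fixed direct system of truncations stabilizes: the maps Hom(Y, X_{≤-i}) → Hom(Y, X_{≤-i-1}) are isomorphisms for all i sufficiently large. -/

import Mathlib

open CategoryTheory Category Limits Pretriangulated
open scoped Classical

universe v u

variable (k : Type) [Field k]
variable (T : Type u) [Category.{v} T] [Preadditive T] [Linear k T] [HasZeroObject T]
  [HasShift T ℤ] [∀ n : ℤ, (shiftFunctor T n).Additive] [Pretriangulated T]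

/-- `T_{>i} = ⊥(Σ^{>-i-1}𝒮)`. -/
def Tgt (𝒮 : Set T) (i : ℤ) : Set T :=
  {X | ∀ (j : ℤ), j > -i - 1 → ∀ s ∈ 𝒮, ∀ f : X ⟶ s⟦j⟧, f = 0}

/-- `T_{≤i} = ⊥(Σ^{<-i}𝒮)`. -/
def Tle (𝒮 : Set T) (i : ℤ) : Set T :=
  {X | ∀ (j : ℤ), j < -i → ∀ s ∈ 𝒮, ∀ f : X ⟶ s⟦j⟧, f = 0}

/-- `(Σ^{≥0}𝒮)^⊥`. -/
def perpGE (𝒮 : Set T) : Set T :=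
  {X | ∀ (j : ℤ), 0 ≤ j → ∀ s ∈ 𝒮, ∀ f : s⟦j⟧ ⟶ X, f = 0}

/-- `(Σ^{<0}𝒮)^⊥`. -/
def perpLT (𝒮 : Set T) : Set T :=
  {X | ∀ (j : ℤ), j < 0 → ∀ s ∈ 𝒮, ∀ f : s⟦j⟧ ⟶ X, f = 0}

/-- A torsion pair `(𝒳, 𝒴)` on a triangulated category. -/
structure IsTorsionPair (𝒳 𝒴 : Set T) : Prop where
  orth : ∀ X ∈ 𝒳, ∀ Y ∈ 𝒴, ∀ f : X ⟶ Y, f = 0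
  tri : ∀ A : T, ∃ (X Y : T) (_ : X ∈ 𝒳) (_ : Y ∈ 𝒴)
    (f : X ⟶ A) (g : A ⟶ Y) (h : Y ⟶ X⟦(1 : ℤ)⟧),
    Triangle.mk f g h ∈ distTriang T

/-- A triangulated subcategory (the Mathlib structure `Triangulated.Subcategory` of Dec 2024,
removed since; restated here with its old fields). -/
structure Triangulated.Subcategory (C : Type*) [Category C] [HasZeroObject C] [HasShift C ℤ]
    [Preadditive C] [∀ (n : ℤ), (shiftFunctor C n).Additive] [Pretriangulated C] where
  P : C → Prop
  zero' : ∃ (Z : C) (_ : IsZero Z), P Z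
  shift (X : C) (n : ℤ) : P X → P (X⟦n⟧)
  ext₂' (T : Triangle C) (_ : T ∈ distTriang C) : P T.obj₁ → P T.obj₃ →
    ∃ (Y : C) (_ : P Y), Nonempty (T.obj₂ ≅ Y)

/-- A triangulated subcategory is thick if it is closed under retracts (direct summands). -/
def IsThick (Q : Triangulated.Subcategory T) : Prop :=
  ∀ X Y : T, (∃ (r : X ⟶ Y) (s : Y ⟶ X), s ≫ r = 𝟙 Y) → Q.P X → Q.P Y

/-- An SMC quadruple `(T, T^p, 𝕊, 𝒮)`: `T` is a `k`-linear, Hom-finite, Krull–Schmidt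
(idempotent complete) triangulated category, `T^p` a thick subcategory, `𝕊` a triangle
auto-equivalence restricting to `T^p` together with a bifunctorial Serre duality
`D Hom(X, Y) ≅ Hom(Y, 𝕊X)` for `X ∈ T^p`, and `𝒮` a simple minded collection inducing the
two co-t-structures of (RS2), with `⊥(Σ^{≥0}𝒮) ⊆ T^p` and `(Σ^{<0}𝒮)^⊥ ⊆ T^p`. -/
structure SMCQuadruple where
  homFin : ∀ X Y : T, FiniteDimensional k (X ⟶ Y)
  idem : IsIdempotentComplete T
  P : Triangulated.Subcategory T
  thick : IsThick T P
  SS : T ≌ T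
  commShift : SS.functor.CommShift ℤ
  triangleFunctor : letI := commShift; SS.functor.IsTriangulated
  restrict : ∀ X : T, P.P X → P.P (SS.functor.obj X)
  restrictInv : ∀ X : T, P.P X → P.P (SS.inverse.obj X)
  serre : ∀ (X Y : T), P.P X → (((X ⟶ Y) →ₗ[k] k) ≃ₗ[k] (Y ⟶ SS.functor.obj X))
  serre_natY : ∀ (X Y Y' : T) (hX : P.P X) (g : Y ⟶ Y') (φ : (X ⟶ Y') →ₗ[k] k),
    serre X Y hX (φ.comp (Linear.rightComp k X g)) = g ≫ serre X Y' hX φ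
  serre_natX : ∀ (X X' Y : T) (hX : P.P X) (hX' : P.P X') (u : X ⟶ X')
    (φ : (X ⟶ Y) →ₗ[k] k),
    serre X' Y hX' (φ.comp (Linear.leftComp k Y u)) = serre X Y hX φ ≫ SS.functor.map u
  𝒮 : Set T
  smc_orth : ∀ X ∈ 𝒮, ∀ Y ∈ 𝒮, ∀ (j : ℤ), j < 0 → ∀ f : X ⟶ Y⟦j⟧, f = 0
  smc_dim : ∀ X ∈ 𝒮, ∀ Y ∈ 𝒮, Module.finrank k (X ⟶ Y) = if X = Y then 1 else 0
  smc_gen : ∀ Q : Triangulated.Subcategory T, IsThick T Q → (∀ s ∈ 𝒮, Q.P s) → ∀ X, Q.P X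
  cot1 : IsTorsionPair T (Tgt T 𝒮 0) (Tle T 𝒮 0)
  cot2 : IsTorsionPair T (perpGE T 𝒮) (perpLT T 𝒮)
  incl1 : Tgt T 𝒮 0 ⊆ P.P
  incl2 : perpLT T 𝒮 ⊆ P.P

/-! ### Auxiliary lemmas -/

set_option linter.unusedSectionVars false

section Aux

open ZeroObject

/-- Transfer a Hom-vanishing statement along a shift of the source (and a reindexing
of the shift of the target). -/
lemma shift_hom_vanish {A B : T} {m : ℤ} (hv : ∀ f' : A ⟶ B⟦m⟧, f' = 0)
    (n j : ℤ) (hj : m + n = j) : ∀ f : A⟦n⟧ ⟶ B⟦j⟧, f = 0 := by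
  intro f
  apply (shiftFunctor T (-n)).map_injective
  rw [Functor.map_zero]
  have hα : n + (-n) = 0 := by omega
  have hδ : j + (-n) = m := by omega
  set α : (A⟦n⟧)⟦(-n : ℤ)⟧ ≅ A := (shiftFunctorCompIsoId T n (-n) hα).app A with hαdef
  set δ : B⟦m⟧ ≅ (B⟦j⟧)⟦(-n : ℤ)⟧ := (shiftFunctorAdd' T j (-n) m hδ).app B with hδdef
  have h0 : α.inv ≫ (shiftFunctor T (-n)).map f ≫ δ.inv = 0 := hv _
  have hrw : (shiftFunctor T (-n)).map f
      = α.hom ≫ (α.inv ≫ (shiftFunctor T (-n)).map f ≫ δ.inv) ≫ δ.hom := by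
    simp
  rw [hrw, h0, zero_comp, comp_zero]

/-- Transfer a Hom-vanishing statement along an iterated shift of the target. -/
lemma target_shift_hom_vanish {A B : T} {m : ℤ} (hv : ∀ f' : A ⟶ B⟦m⟧, f' = 0)
    (j n : ℤ) (hj : j + n = m) : ∀ f : A ⟶ (B⟦j⟧)⟦n⟧, f = 0 := by
  intro f
  set δ : B⟦m⟧ ≅ (B⟦j⟧)⟦n⟧ := (shiftFunctorAdd' T j n m hj).app B with hδdef
  have h0 : f ≫ δ.inv = 0 := hv _
  have hrw : f = (f ≫ δ.inv) ≫ δ.hom := by simp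
  rw [hrw, h0, zero_comp]

/-- `Z` is "deep": all maps to `s⟦m⟧` vanish for `m < p`, `s ∈ 𝒮`. -/
def deepHom (E : SMCQuadruple k T) (p : ℤ) (Z : T) : Prop :=
  ∀ m : ℤ, m < p → ∀ s ∈ E.𝒮, ∀ f : Z ⟶ s⟦m⟧, f = 0

/-- Key generation lemma: for every object `W`, maps from sufficiently deep objects
to `W` vanish. -/
lemma deep_hom_vanish (E : SMCQuadruple k T) (W : T) :
    ∃ p : ℤ, ∀ Z : T, deepHom k T E p Z → ∀ f : Z ⟶ W, f = 0 := by
  set P : T → Prop := fun W => ∃ p : ℤ, ∀ Z : T, deepHom k T E p Z → ∀ f : Z ⟶ W, f = 0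
    with hPdef
  have hzero : P 0 := by
    refine ⟨0, fun Z _ f => ?_⟩
    exact (isZero_zero T).eq_of_tgt f 0
  have hshift : ∀ (X : T) (n : ℤ), P X → P (X⟦n⟧) := by
    rintro X n ⟨p, hp⟩
    refine ⟨p + n, fun Z hZ f => ?_⟩
    have hZ' : deepHom k T E p (Z⟦(-n : ℤ)⟧) := by
      intro m hm s hs
      exact shift_hom_vanish T (fun f' => hZ (m + n) (by omega) s hs f') (-n) m (by omega)
    have hadj : (-n) + n = 0 := by omega
    set adj := (shiftEquiv' T (-n) n hadj).toAdjunction with hadjdef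
    have hg : (adj.homEquiv Z X).symm f = 0 := hp _ hZ' _
    have : f = (adj.homEquiv Z X) ((adj.homEquiv Z X).symm f) :=
      ((adj.homEquiv Z X).apply_symm_apply f).symm
    rw [this, hg]
    simp [Adjunction.homEquiv_apply]
    exact rfl
  have hext : ∀ (Tr : Triangle T) (_ : Tr ∈ distTriang T), P Tr.obj₁ → P Tr.obj₃ →
      P Tr.obj₂ := by
    rintro Tr hTr ⟨p₁, h₁⟩ ⟨p₃, h₃⟩
    refine ⟨max p₁ p₃, fun Z hZ f => ?_⟩
    have hZ₁ : deepHom k T E p₁ Z := fun m hm => hZ m (lt_of_lt_of_le hm (le_max_left _ _))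
    have hZ₃ : deepHom k T E p₃ Z := fun m hm => hZ m (lt_of_lt_of_le hm (le_max_right _ _))
    have hf3 : f ≫ Tr.mor₂ = 0 := h₃ Z hZ₃ _
    obtain ⟨g, hg⟩ := Triangle.coyoneda_exact₂ Tr hTr f hf3
    rw [hg, h₁ Z hZ₁ g, zero_comp]
  set Q : Triangulated.Subcategory T := { P := P, zero' := ⟨0, isZero_zero T, hzero⟩, shift := hshift, ext₂' := fun Tr hTr h1 h3 => ⟨Tr.obj₂, hext Tr hTr h1 h3, ⟨Iso.refl _⟩⟩ }
    with hQdef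
  have hQthick : IsThick T Q := by
    rintro A B ⟨r, s, hsr⟩ ⟨p, hp⟩
    refine ⟨p, fun Z hZ f => ?_⟩
    have h0 : f ≫ s = 0 := hp Z hZ (f ≫ s)
    calc f = f ≫ 𝟙 B := by rw [comp_id]
    _ = (f ≫ s) ≫ r := by rw [← hsr, assoc]
    _ = 0 := by rw [h0, zero_comp]
  have hQbase : ∀ s ∈ E.𝒮, Q.P s := by
    intro s hs
    refine ⟨1, fun Z hZ f => ?_⟩
    have h0 : f ≫ ((shiftFunctorZero T ℤ).app s).inv = 0 :=
      hZ 0 (by omega) s hs _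
    calc f = (f ≫ ((shiftFunctorZero T ℤ).app s).inv) ≫ ((shiftFunctorZero T ℤ).app s).hom := by
          simp
    _ = 0 := by rw [h0, zero_comp]
  exact E.smc_gen Q hQthick hQbase W

/-- If all maps `Z ⟶ s⟦j⟧` vanish for `j > b`, then `Z` lies in the thick subcategory
`T^p` (using `incl1` and closure properties). -/
lemma mem_P_of_bdd (E : SMCQuadruple k T) (Z : T) (b : ℤ)
    (hb : ∀ j : ℤ, b < j → ∀ s ∈ E.𝒮, ∀ f : Z ⟶ s⟦j⟧, f = 0) : E.P.P Z := by
  have h1 : Z⟦(-(b + 1) : ℤ)⟧ ∈ Tgt T E.𝒮 0 := by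
    intro j hj s hs
    exact shift_hom_vanish T (fun f' => hb (j + (b + 1)) (by omega) s hs f')
      (-(b + 1)) j (by omega)
  have hP1 : E.P.P (Z⟦(-(b + 1) : ℤ)⟧) := E.incl1 h1
  have hP2 : E.P.P ((Z⟦(-(b + 1) : ℤ)⟧)⟦(b + 1 : ℤ)⟧) := E.P.shift _ _ hP1
  have e : (Z⟦(-(b + 1) : ℤ)⟧)⟦(b + 1 : ℤ)⟧ ≅ Z :=
    (shiftFunctorCompIsoId T (-(b + 1)) (b + 1) (by omega)).app Z
  exact E.thick _ _ ⟨e.hom, e.inv, e.inv_hom_id⟩ hP2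

/-- Serre duality: maps from a fixed `Y` into a deep perfect object vanish. -/
lemma hom_into_perfect_deep_vanish (E : SMCQuadruple k T) (Y Z : T) (hZP : E.P.P Z)
    (p₀ : ℤ) (hp₀ : ∀ Z' : T, deepHom k T E p₀ Z' → ∀ f : Z' ⟶ E.SS.functor.obj Y, f = 0)
    (hdeep : deepHom k T E p₀ Z) : ∀ f : Y ⟶ Z, f = 0 := by
  intro f
  set V := E.SS.inverse.obj Z with hVdef
  have hVP : E.P.P V := E.restrictInv Z hZP
  have e : E.SS.functor.obj V ≅ Z := E.SS.counitIso.app Z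
  have hVY : ∀ v : V ⟶ Y, v = 0 := by
    intro v
    have h1 : e.inv ≫ E.SS.functor.map v = 0 := hp₀ Z hdeep _
    have h2 : E.SS.functor.map v = e.hom ≫ e.inv ≫ E.SS.functor.map v := by
      rw [← assoc, e.hom_inv_id, id_comp]
    rw [h1, comp_zero] at h2
    exact E.SS.functor.zero_of_map_zero v h2
  set hser := E.serre V Y hVP with hserdef
  have h4 : hser.symm (f ≫ e.inv) = 0 := by
    apply LinearMap.ext
    intro v
    rw [hVY v, map_zero, LinearMap.zero_apply]
  have h5 : f ≫ e.inv = 0 := by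
    have h6 : f ≫ e.inv = hser (hser.symm (f ≫ e.inv)) :=
      (hser.apply_symm_apply (f ≫ e.inv)).symm
    rw [h6, h4, map_zero]
  calc f = (f ≫ e.inv) ≫ e.hom := by rw [assoc, e.inv_hom_id, comp_id]
  _ = 0 := by rw [h5, zero_comp]

end Aux

/-- In an SMC quadruple `(T, T^p, 𝕊, 𝒮)`, for any objects `X, Y` of `T` and any fixed
system of truncation triangles `X_{>-p} → X → X_{≤-p} → Σ X_{>-p}` with connecting maps
`ξ_p : X_{≤-p} → X_{≤-p-1}`, the direct system
`Hom(Y, X) → Hom(Y, X_{≤0}) → Hom(Y, X_{≤-1}) → ⋯` stabilizes: composition with `ξ_p`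
is bijective for all sufficiently large `p`. -/
theorem stmt6 (E : SMCQuadruple k T) (X Y : T)
    (Xgt Xle : ℕ → T)
    (hgt : ∀ p : ℕ, Xgt p ∈ Tgt T E.𝒮 (-(p : ℤ))) (hle : ∀ p : ℕ, Xle p ∈ Tle T E.𝒮 (-(p : ℤ)))
    (f : ∀ p : ℕ, Xgt p ⟶ X) (g : ∀ p : ℕ, X ⟶ Xle p)
    (h : ∀ p : ℕ, Xle p ⟶ (Xgt p)⟦(1 : ℤ)⟧)
    (htri : ∀ p, Triangle.mk (f p) (g p) (h p) ∈ distTriang T)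
    (ξ : ∀ p : ℕ, Xle p ⟶ Xle (p + 1)) (hξ : ∀ p, g p ≫ ξ p = g (p + 1)) :
    ∃ N : ℕ, ∀ p : ℕ, N ≤ p →
      Function.Bijective (fun u : Y ⟶ Xle p => u ≫ ξ p) := by
  classical
  -- convenient forms of the membership hypotheses
  have hgtP : ∀ (r : ℕ) (j : ℤ), (r : ℤ) - 1 < j → ∀ s ∈ E.𝒮, ∀ f' : Xgt r ⟶ s⟦j⟧, f' = 0 := by
    intro r j hj s hs f'
    exact hgt r j (by omega) s hs f'
  have hleP : ∀ (r : ℕ) (j : ℤ), j < (r : ℤ) → ∀ s ∈ E.𝒮, ∀ f' : Xle r ⟶ s⟦j⟧, f' = 0 := by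
    intro r j hj s hs f'
    exact hle r j (by omega) s hs f'
  -- contravariant long exact sequence manipulations
  have B1surj : ∀ (r : ℕ) (C : T), (∀ u : Xgt r ⟶ C, u = 0) →
      ∀ ψ : X ⟶ C, ∃ φ : Xle r ⟶ C, ψ = g r ≫ φ := by
    intro r C h1 ψ
    exact Triangle.yoneda_exact₂ _ (htri r) ψ (h1 _)
  have B1inj : ∀ (r : ℕ) (C : T), (∀ u : (Xgt r)⟦(1 : ℤ)⟧ ⟶ C, u = 0) →
      ∀ φ : Xle r ⟶ C, g r ≫ φ = 0 → φ = 0 := by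
    intro r C h2 φ hφ
    obtain ⟨ρ, hρ⟩ := Triangle.yoneda_exact₃ _ (htri r) φ hφ
    rw [hρ, h2 ρ]
    exact comp_zero
  have B2surj : ∀ (r : ℕ) (C : T), (∀ u : Xgt (r + 1) ⟶ C, u = 0) →
      (∀ u : (Xgt r)⟦(1 : ℤ)⟧ ⟶ C, u = 0) →
      ∀ ρ : Xle r ⟶ C, ∃ ρ' : Xle (r + 1) ⟶ C, ρ = ξ r ≫ ρ' := by
    intro r C h1 h2 ρ
    obtain ⟨ρ', hρ'⟩ := B1surj (r + 1) C h1 (g r ≫ ρ)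
    refine ⟨ρ', ?_⟩
    have h0 : g r ≫ (ρ - ξ r ≫ ρ') = 0 := by
      rw [Preadditive.comp_sub, ← assoc, hξ r, ← hρ', sub_self]
    have h3 := B1inj r C h2 _ h0
    rwa [sub_eq_zero] at h3
  have B2inj : ∀ (r : ℕ) (C : T), (∀ u : (Xgt (r + 1))⟦(1 : ℤ)⟧ ⟶ C, u = 0) →
      ∀ ρ' : Xle (r + 1) ⟶ C, ξ r ≫ ρ' = 0 → ρ' = 0 := by
    intro r C h2 ρ' h
    apply B1inj (r + 1) C h2 ρ'
    rw [← hξ r, assoc, h, comp_zero]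
  -- the bound coming from Serre duality + generation
  obtain ⟨p₀, hp₀⟩ := deep_hom_vanish k T E (E.SS.functor.obj Y)
  refine ⟨(max p₀ 0).toNat, fun p hNp => ?_⟩
  have hq : p₀ ≤ (p : ℤ) := by
    have h1 : ((max p₀ 0).toNat : ℤ) ≤ (p : ℤ) := by exact_mod_cast hNp
    exact le_trans (le_max_left p₀ 0) (le_trans (Int.self_le_toNat _) h1)
  -- the cone of ξ p
  obtain ⟨Eo, β, γ, hEo⟩ := distinguished_cocone_triangle (ξ p)
  -- outgoing maps of the cone vanish in low degrees
  have Elow : ∀ (m : ℤ), m ≤ (p : ℤ) → ∀ s ∈ E.𝒮, ∀ φ : Eo ⟶ s⟦m⟧, φ = 0 := by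
    intro m hm s hs φ
    have h1 : β ≫ φ = 0 := hleP (p + 1) m (by push_cast; omega) s hs _
    obtain ⟨ρ, hρ⟩ := Triangle.yoneda_exact₃ _ hEo φ h1
    have hρ0 : ρ = 0 :=
      shift_hom_vanish T (fun f' => hleP p (m - 1) (by omega) s hs f') 1 m (by omega) ρ
    rw [hρ, hρ0, comp_zero]
    exact rfl
  -- outgoing maps of the cone vanish in high degrees
  have Ehigh : ∀ (m : ℤ), (p : ℤ) + 3 ≤ m → ∀ s ∈ E.𝒮, ∀ φ : Eo ⟶ s⟦m⟧, φ = 0 := by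
    intro m hm s hs φ
    -- β ≫ φ vanishes
    have h1 : ξ p ≫ β ≫ φ = 0 := by
      rw [← assoc]
      have hz : ξ p ≫ β = 0 := comp_distTriang_mor_zero₁₂ _ hEo
      rw [hz, zero_comp]
    have hB2i : ∀ u : (Xgt (p + 1))⟦(1 : ℤ)⟧ ⟶ s⟦m⟧, u = 0 :=
      shift_hom_vanish T (fun f' => hgtP (p + 1) (m - 1) (by push_cast; omega) s hs f')
        1 m (by omega)
    have h2 : β ≫ φ = 0 := B2inj p (s⟦m⟧) hB2i _ h1
    obtain ⟨ρ, hρ⟩ := Triangle.yoneda_exact₃ _ hEo φ h2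
    -- ρ : (Xle p)⟦1⟧ ⟶ s⟦m⟧ ; transport along the shift adjunction
    have hadj : (1 : ℤ) + (-1) = 0 := by omega
    set adj := (shiftEquiv' T (1 : ℤ) (-1) hadj).toAdjunction with hadjdef
    set ρ₀ := adj.homEquiv (Xle p) (s⟦m⟧) ρ with hρ₀def
    have hA : ∀ u : Xgt (p + 1) ⟶ (s⟦m⟧)⟦(-1 : ℤ)⟧, u = 0 :=
      target_shift_hom_vanish T (fun f' => hgtP (p + 1) (m - 1) (by push_cast; omega) s hs f')
        m (-1) (by omega)
    have hB' : ∀ u : (Xgt p)⟦(1 : ℤ)⟧ ⟶ s⟦m - 1⟧, u = 0 :=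
      shift_hom_vanish T (fun f' => hgtP p (m - 2) (by push_cast; omega) s hs f')
        1 (m - 1) (by omega)
    have hB : ∀ u : (Xgt p)⟦(1 : ℤ)⟧ ⟶ (s⟦m⟧)⟦(-1 : ℤ)⟧, u = 0 :=
      target_shift_hom_vanish T hB' m (-1) (by omega)
    obtain ⟨ρ₁, hρ₁⟩ := B2surj p ((s⟦m⟧)⟦(-1 : ℤ)⟧) hA hB ρ₀
    have hnat : ρ = (shiftEquiv' T (1 : ℤ) (-1) hadj).functor.map (ξ p) ≫
        (adj.homEquiv (Xle (p + 1)) (s⟦m⟧)).symm ρ₁ := by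
      have hthis := adj.homEquiv_naturality_left_symm (ξ p) ρ₁
      rw [← hthis]
      exact ((adj.homEquiv (Xle p) (s⟦m⟧)).symm_apply_apply ρ).symm.trans (congrArg _ hρ₁)
    have hz31 : (Triangle.mk (ξ p) β γ).mor₃ ≫ (shiftEquiv' T (1 : ℤ) (-1) hadj).functor.map (ξ p) = 0 :=
      comp_distTriang_mor_zero₃₁ _ hEo
    rw [hρ, hnat]
    erw [← assoc, hz31, zero_comp]
    exact rfl
  -- the cone is perfect
  have hEoP : E.P.P Eo :=
    mem_P_of_bdd k T E Eo ((p : ℤ) + 2) (fun j hj s hs => Ehigh j (by omega) s hs)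
  -- the cone and its (-1)-shift are deep
  have hdeepE : deepHom k T E p₀ Eo := fun m hm s hs =>
    Elow m (by omega) s hs
  have hdeepE' : deepHom k T E p₀ (Eo⟦(-1 : ℤ)⟧) := fun m hm s hs =>
    shift_hom_vanish T (Elow (m + 1) (by omega) s hs) (-1) m (by omega)
  -- the two vanishing statements
  have hvan : ∀ w : Y ⟶ Eo, w = 0 :=
    hom_into_perfect_deep_vanish k T E Y Eo hEoP p₀ hp₀ hdeepE
  have hvan' : ∀ w : Y ⟶ Eo⟦(-1 : ℤ)⟧, w = 0 :=
    hom_into_perfect_deep_vanish k T E Y (Eo⟦(-1 : ℤ)⟧) (E.P.shift Eo (-1) hEoP) p₀ hp₀ hdeepE'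
  constructor
  · -- injectivity
    intro u₁ u₂ h12
    have h12' : u₁ ≫ ξ p = u₂ ≫ ξ p := h12
    have hsub : (u₁ - u₂) ≫ ξ p = 0 := by
      rw [Preadditive.sub_comp, h12', sub_self]
    have hinv := inv_rot_of_distTriang _ hEo
    obtain ⟨v, hv⟩ := Triangle.coyoneda_exact₂ _ hinv (u₁ - u₂) hsub
    have hv0 : v = 0 := hvan' v
    have : u₁ - u₂ = 0 := by rw [hv, hv0, zero_comp]; exact rfl
    exact sub_eq_zero.mp this
  · -- surjectivity
    intro v
    obtain ⟨u, hu⟩ := Triangle.coyoneda_exact₂ _ hEo v (hvan (v ≫ β))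
    exact ⟨u, hu.symm⟩
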